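/- For every n ≥ 1, k ≥ 1, every symmetric matrix A ∈ {0,1}^{n×n} with zero diagonal, and every e ∈ [k]^n, the maximum-likelihood modularity and the integrated conditional likelihood modularity satisfy |Q_ICL(e) − Q_ML(e)| ≤ k²(log n + 2)/n². -/

import Mathlib

open Finset Filter
open scoped Classical BigOperators Topology

noncomputable section

namespace SBM

variable {n k : ℕ}

/-- Number of nodes with label `a`. -/
def nCount (z : Fin n → Fin k) (a : Fin k) : ℕ :=
  (Finset.univ.filter fun i => z i = a).card

/-- `n_{ab}(z)`. -/
def nab (z : Fin n → Fin k) (a b : Fin k) : ℝ :=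
  if a = b then (nCount z a : ℝ) * ((nCount z a : ℝ) - 1)
  else (nCount z a : ℝ) * (nCount z b : ℝ)

/-- `o_{ab}(z)`: number of (ordered) edges between communities `a` and `b`. -/
def oab (A : Fin n → Fin n → Bool) (z : Fin n → Fin k) (a b : Fin k) : ℝ :=
  ∑ i : Fin n, ∑ j : Fin n, if z i = a ∧ z j = b ∧ A i j = true then (1 : ℝ) else 0

/-- `τ(x) = x log x + (1-x) log(1-x)` (with `Real.log 0 = 0`, so `0 log 0 = 0`). -/
def tau (x : ℝ) : ℝ := x * Real.log x + (1 - x) * Real.log (1 - x)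

/-- Maximum likelihood modularity. -/
def QML (A : Fin n → Fin n → Bool) (z : Fin n → Fin k) : ℝ :=
  (1 / (2 * (n : ℝ) ^ 2)) *
    ∑ a : Fin k, ∑ b : Fin k, nab z a b * tau (oab A z a b / nab z a b)

/-- The Beta function. -/
def Beta (x y : ℝ) : ℝ := Real.Gamma x * Real.Gamma y / Real.Gamma (x + y)

def otilde (A : Fin n → Fin n → Bool) (z : Fin n → Fin k) (a b : Fin k) : ℝ :=
  if a = b then oab A z a b / 2 else oab A z a b

def ntilde (z : Fin n → Fin k) (a b : Fin k) : ℝ :=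
  if a = b then nab z a b / 2 else nab z a b

/-- Integrated conditional likelihood modularity. -/
def QICL (A : Fin n → Fin n → Bool) (z : Fin n → Fin k) : ℝ :=
  (1 / (n : ℝ) ^ 2) *
    ∑ p ∈ Finset.univ.filter (fun p : Fin k × Fin k => p.1 ≤ p.2),
      Real.log (Beta (otilde A z p.1 p.2 + 1 / 2)
          (ntilde z p.1 p.2 - otilde A z p.1 p.2 + 1 / 2) / Beta (1 / 2) (1 / 2))

/-- The adjacency matrix is symmetric with zero diagonal. -/
def ValidAdj (A : Fin n → Fin n → Bool) : Prop :=
  (∀ i j, A i j = A j i) ∧ ∀ i, A i i = false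

/-- Density of the conditional SBM edge model given the labels `z`:
independent Bernoulli(`ρ S (z i) (z j)`) edges for `i < j`. -/
def edgeDensity (ρ : ℝ) (S : Matrix (Fin k) (Fin k) ℝ) (z : Fin n → Fin k)
    (A : Fin n → Fin n → Bool) : ℝ :=
  ∏ p ∈ Finset.univ.filter (fun p : Fin n × Fin n => p.1 < p.2),
    (if A p.1 p.2 then ρ * S (z p.1) (z p.2) else 1 - ρ * S (z p.1) (z p.2))

/-- Conditional probability of an event on the adjacency matrix, given labels `z`. -/
def condProb (ρ : ℝ) (S : Matrix (Fin k) (Fin k) ℝ) (z : Fin n → Fin k)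
    (E : (Fin n → Fin n → Bool) → Prop) : ℝ :=
  ∑ A : Fin n → Fin n → Bool, if ValidAdj A ∧ E A then edgeDensity ρ S z A else 0

/-- Conditional expectation of a function of the adjacency matrix, given labels `z`. -/
def condExp (ρ : ℝ) (S : Matrix (Fin k) (Fin k) ℝ) (z : Fin n → Fin k)
    (f : (Fin n → Fin n → Bool) → ℝ) : ℝ :=
  ∑ A : Fin n → Fin n → Bool, if ValidAdj A then edgeDensity ρ S z A * f A else 0

/-- Probability of an event under the SBM: labels are i.i.d. `π`, edges are conditionally
independent Bernoulli(`ρ S (z i) (z j)`). -/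
def sbmProb (π : Fin k → ℝ) (ρ : ℝ) (S : Matrix (Fin k) (Fin k) ℝ)
    (E : (Fin n → Fin k) → (Fin n → Fin n → Bool) → Prop) : ℝ :=
  ∑ z : Fin n → Fin k, (∏ i, π (z i)) * condProb ρ S z (E z)

/-- Number of disagreements between two label vectors. -/
def hamming (e z : Fin n → Fin k) : ℕ :=
  (Finset.univ.filter fun i => e i ≠ z i).card

/-- Misclassification distance: minimum number of disagreements over permutations of labels. -/
def mDist (e z : Fin n → Fin k) : ℕ :=
  Finset.univ.inf' ⟨Equiv.refl (Fin k), Finset.mem_univ _⟩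
    (fun σ : Equiv.Perm (Fin k) => (Finset.univ.filter fun i => e i ≠ σ (z i)).card)

/-- Confusion matrix `R(e,z)`. -/
def confusion (e z : Fin n → Fin k) : Matrix (Fin k) (Fin k) ℝ :=
  Matrix.of fun a b => (1 / (n : ℝ)) * ∑ i : Fin n, if e i = a ∧ z i = b then (1 : ℝ) else 0

/-- `[R 1]_a` : row sums. -/
def rowSum (R : Matrix (Fin k) (Fin k) ℝ) (a : Fin k) : ℝ := ∑ j, R a j

/-- `[Rᵀ 1]_a` : column sums. -/
def colSum (R : Matrix (Fin k) (Fin k) ℝ) (a : Fin k) : ℝ := ∑ i, R i a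

/-- `[P_R]_{ab}`. -/
def PR (P R : Matrix (Fin k) (Fin k) ℝ) (n : ℕ) (a b : Fin k) : ℝ :=
  ((R * P * R.transpose) a b - (if a = b then (∑ i, P i i * R a i) / n else 0)) /
    (rowSum R a * (rowSum R b - if a = b then 1 / (n : ℝ) else 0))

/-- The population modularity `H_{P,n}(R)`. -/
def Hmod (P R : Matrix (Fin k) (Fin k) ℝ) (n : ℕ) : ℝ :=
  (1 / 2) * ∑ a : Fin k, ∑ b : Fin k,
    rowSum R a * (rowSum R b - if a = b then 1 / (n : ℝ) else 0) * tau (PR P R n a b)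

/-- The centered modularity `X(e,z)` (with `P = ρ S`). -/
def Xfun (ρ : ℝ) (S : Matrix (Fin k) (Fin k) ℝ) (A : Fin n → Fin n → Bool)
    (e z : Fin n → Fin k) : ℝ :=
  (1 / (2 * (n : ℝ) ^ 2)) * ∑ a : Fin k, ∑ b : Fin k,
    nab e a b * (tau (oab A e a b / nab e a b) - tau (PR (ρ • S) (confusion e z) n a b))

/-- The limit functional `G_S(R)` (terms with `[RSRᵀ]_{ab} = 0` vanish). -/
def GS (S R : Matrix (Fin k) (Fin k) ℝ) : ℝ :=
  ∑ a : Fin k, ∑ b : Fin k,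
    (R * S * R.transpose) a b *
      Real.log ((R * S * R.transpose) a b / (rowSum R a * rowSum R b))

/-- Entry-wise `ℓ¹` norm of a matrix. -/
def l1norm (M : Matrix (Fin k) (Fin k) ℝ) : ℝ := ∑ a : Fin k, ∑ b : Fin k, |M a b|

/-- `s_max`. -/
def sMax (S : Matrix (Fin k) (Fin k) ℝ) : ℝ :=
  sSup (Set.range fun p : Fin k × Fin k => S p.1 p.2)

/-- `s_min`. -/
def sMin (S : Matrix (Fin k) (Fin k) ℝ) : ℝ :=
  sInf (Set.range fun p : Fin k × Fin k => S p.1 p.2)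

/-- `H_t(p‖q) = (1-t)p + tq - p^{1-t} q^t`. -/
def Ht (t p q : ℝ) : ℝ := (1 - t) * p + t * q - p ^ (1 - t) * q ^ t

/-- `max_{t ∈ [0,1]} Σ_a π_a H_t(S_{ab} ‖ S_{ab'})`. -/
def CtMax (π : Fin k → ℝ) (S : Matrix (Fin k) (Fin k) ℝ) (b b' : Fin k) : ℝ :=
  sSup ((fun t => ∑ a : Fin k, π a * Ht t (S a b) (S a b')) '' Set.Icc (0 : ℝ) 1)

/-- The phase-transition constant `C(π,S)`. -/
def Cconst (π : Fin k → ℝ) (S : Matrix (Fin k) (Fin k) ℝ) : ℝ :=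
  sInf {x : ℝ | ∃ b b' : Fin k, b ≠ b' ∧ x = CtMax π S b b'}

/-- `K_t(p‖q) = p^{1-t} q^t + t p log(p/q) - p`. -/
def Kt (t p q : ℝ) : ℝ := p ^ (1 - t) * q ^ t + t * p * Real.log (p / q) - p

/-- `K₁(p‖q) = p log(p/q) + q - p`. -/
def K1 (p q : ℝ) : ℝ := p * Real.log (p / q) + q - p

/-- Kullback–Leibler divergence between Bernoulli(s) and Bernoulli(t). -/
def KLBern (s t : ℝ) : ℝ := s * Real.log (s / t) + (1 - s) * Real.log ((1 - s) / (1 - t))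

/-- Off-diagonal pairs of labels. -/
def offDiag (k : ℕ) : Finset (Fin k × Fin k) :=
  Finset.univ.filter fun p => p.1 ≠ p.2

/-- `C_t(R,S) = Σ_a Σ_{b ≠ b'} [Rᵀ1]_a K_t(S_{ab}‖S_{ab'}) R_{b'b}`. -/
def CtRS (t : ℝ) (R S : Matrix (Fin k) (Fin k) ℝ) : ℝ :=
  ∑ a : Fin k, ∑ p ∈ offDiag k, colSum R a * Kt t (S a p.1) (S a p.2) * R p.2 p.1

/-- Membership in `F(n,α)`: all communities have size at least `α n`. -/
def inF (α : ℝ) (z : Fin n → Fin k) : Prop := ∀ a, α * n ≤ (nCount z a : ℝ)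

/-- `zh` is a maximizer of the ML modularity over `F(n,α)`. -/
def IsMLE (α : ℝ) (A : Fin n → Fin n → Bool) (zh : Fin n → Fin k) : Prop :=
  inF α zh ∧ ∀ e : Fin n → Fin k, inF α e → QML A e ≤ QML A zh

/-- `zh` is a maximizer of the ICL modularity over `F(n,α)`. -/
def IsICL (α : ℝ) (A : Fin n → Fin n → Bool) (zh : Fin n → Fin k) : Prop :=
  inF α zh ∧ ∀ e : Fin n → Fin k, inF α e → QICL A e ≤ QICL A zh

lemma stirling_lb (j : ℕ) (hj : 1 ≤ j) :
    Real.sqrt Real.pi ≤ Stirling.stirlingSeq j := by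
  obtain ⟨i, rfl⟩ := Nat.exists_eq_add_of_le hj
  have h : Tendsto (Stirling.stirlingSeq ∘ Nat.succ) atTop (nhds (Real.sqrt Real.pi)) :=
    Stirling.tendsto_stirlingSeq_sqrt_pi.comp (tendsto_add_atTop_nat 1)
  have := Stirling.stirlingSeq'_antitone.le_of_tendsto h i
  simpa [Nat.add_comm] using this

lemma stirling_ub (j : ℕ) (hj : 1 ≤ j) :
    Stirling.stirlingSeq j ≤ Real.exp 1 / Real.sqrt 2 := by
  obtain ⟨i, rfl⟩ := Nat.exists_eq_add_of_le hj
  have := Stirling.stirlingSeq'_antitone (Nat.zero_le i)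
  simpa [Nat.add_comm, Function.comp, Stirling.stirlingSeq_one] using this

lemma log_factorial_bounds (j : ℕ) (hj : 1 ≤ j) :
    (1/2) * Real.log Real.pi + ((1/2) * Real.log (2*j) + ((j:ℝ) * Real.log j - j)) ≤
        Real.log (j.factorial : ℝ) ∧
    Real.log (j.factorial : ℝ) ≤ (1 - (1/2) * Real.log 2) + ((1/2) * Real.log (2*j) + ((j:ℝ) * Real.log j - j)) := by
  have hjR : (1:ℝ) ≤ (j:ℝ) := by exact_mod_cast hj
  have hj0 : (0:ℝ) < (j:ℝ) := by linarith
  have hP : (0:ℝ) < Real.sqrt (2*j) * ((j:ℝ)/Real.exp 1)^j := by positivity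
  have hdef : Stirling.stirlingSeq j = (j.factorial : ℝ) / (Real.sqrt (2*j) * ((j:ℝ)/Real.exp 1)^j) := rfl
  have hlb := stirling_lb j hj
  have hub := stirling_ub j hj
  rw [hdef, le_div_iff₀ hP] at hlb
  rw [hdef, div_le_iff₀ hP] at hub
  have hfac : (0:ℝ) < (j.factorial : ℝ) := by exact_mod_cast j.factorial_pos
  have hlogP : Real.log (Real.sqrt (2*j) * ((j:ℝ)/Real.exp 1)^j)
      = (1/2) * Real.log (2*j) + ((j:ℝ) * Real.log j - j) := by
    rw [Real.log_mul (by positivity) (by positivity), Real.log_sqrt (by positivity),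
      Real.log_pow, Real.log_div (ne_of_gt hj0) (Real.exp_ne_zero 1), Real.log_exp]
    ring
  constructor
  · calc (1/2) * Real.log Real.pi + ((1/2) * Real.log (2*j) + ((j:ℝ) * Real.log j - j))
        = Real.log (Real.sqrt Real.pi * (Real.sqrt (2*j) * ((j:ℝ)/Real.exp 1)^j)) := by
          rw [Real.log_mul (by positivity) (ne_of_gt hP), Real.log_sqrt Real.pi_pos.le, hlogP]; ring
      _ ≤ Real.log (j.factorial : ℝ) := Real.log_le_log (by positivity) hlb
  · calc Real.log (j.factorial : ℝ) ≤ Real.log (Real.exp 1 / Real.sqrt 2 * (Real.sqrt (2*j) * ((j:ℝ)/Real.exp 1)^j)) :=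
        Real.log_le_log hfac hub
      _ = (1 - (1/2) * Real.log 2) + ((1/2) * Real.log (2*j) + ((j:ℝ) * Real.log j - j)) := by
          rw [Real.log_mul (by positivity) (ne_of_gt hP), Real.log_div (Real.exp_ne_zero 1) (by positivity),
            Real.log_exp, Real.log_sqrt (by norm_num), hlogP]; ring

lemma log_pi_ge : (1:ℝ) ≤ Real.log Real.pi := by
  rw [show (1:ℝ) = Real.log (Real.exp 1) from (Real.log_exp 1).symm]
  apply Real.log_le_log (Real.exp_pos 1)
  nlinarith [Real.exp_one_lt_d9, Real.pi_gt_three]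

lemma log_two_ge : (1:ℝ)/2 ≤ Real.log 2 := by
  nlinarith [Real.log_two_gt_d9]

lemma Gamma_nat_add_half (m : ℕ) :
    Real.Gamma ((m:ℝ) + 1/2) = Real.sqrt Real.pi * (2*m).factorial / (4^m * m.factorial) := by
  induction m with
  | zero => rw [show ((0:ℕ):ℝ)+1/2 = 1/2 by norm_num, Real.Gamma_one_half_eq]; simp
  | succ m ih =>
    have h0 : ((m:ℝ) + 1/2) ≠ 0 := by positivity
    have : ((m+1:ℕ):ℝ) + 1/2 = ((m:ℝ) + 1/2) + 1 := by push_cast; ring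
    rw [this, Real.Gamma_add_one h0, ih]
    have h1 : (2*(m+1)) = (2*m+1) + 1 := by ring
    rw [h1, Nat.factorial_succ, Nat.factorial_succ, Nat.factorial_succ]
    have h4 : (0:ℝ) < 4^m := by positivity
    have hm : (0:ℝ) < (m.factorial : ℝ) := by exact_mod_cast m.factorial_pos
    field_simp
    push_cast
    ring

lemma beta_ratio (m M : ℕ) :
    Beta ((m:ℝ) + 1/2) ((M:ℝ) + 1/2) / Beta (1/2) (1/2)
      = ((2*m).factorial * (2*M).factorial : ℝ) /
          (4^(m+M) * m.factorial * M.factorial * (m+M).factorial) := by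
  have hsum : ((m:ℝ) + 1/2) + ((M:ℝ) + 1/2) = ((m+M:ℕ):ℝ) + 1 := by push_cast; ring
  have hhalf : (1:ℝ)/2 + 1/2 = (0:ℕ) + (1:ℝ) := by norm_num
  rw [Beta, Beta, hsum, Real.Gamma_nat_eq_factorial, hhalf, Real.Gamma_nat_eq_factorial,
    Gamma_nat_add_half, Gamma_nat_add_half]
  have h12 : Real.Gamma (1/2 : ℝ) = Real.sqrt Real.pi := Real.Gamma_one_half_eq
  rw [h12]
  have hpi : Real.sqrt Real.pi ≠ 0 := by positivity
  have h1 : ((m.factorial : ℝ)) ≠ 0 := by exact_mod_cast m.factorial_pos.ne'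
  have h2 : ((M.factorial : ℝ)) ≠ 0 := by exact_mod_cast M.factorial_pos.ne'
  have h3 : (((m+M).factorial : ℝ)) ≠ 0 := by exact_mod_cast (m+M).factorial_pos.ne'
  have h4 : ((4:ℝ)^m) ≠ 0 := by positivity
  have h5 : ((4:ℝ)^M) ≠ 0 := by positivity
  have hsq : Real.sqrt Real.pi * Real.sqrt Real.pi = Real.pi := Real.mul_self_sqrt Real.pi_pos.le
  field_simp
  rw [pow_add]
  linear_combination

lemma core_le (m M : ℕ) (hmM : m ≤ M) :
    |Real.log (Beta ((m:ℝ)+1/2) ((M:ℝ)+1/2) / Beta (1/2) (1/2)) -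
      ((m:ℝ)*Real.log m + (M:ℝ)*Real.log M - ((m:ℝ)+(M:ℝ))*Real.log ((m:ℝ)+(M:ℝ)))| ≤
    (1/2)*Real.log ((m:ℝ)+(M:ℝ)) + 1 := by
  rw [beta_ratio]
  rcases Nat.eq_zero_or_pos M with hM0 | hM1
  · -- M = 0 hence m = 0
    have hm0 : m = 0 := le_antisymm (hM0 ▸ hmM) (Nat.zero_le m)
    subst hm0; subst hM0
    norm_num
  -- M ≥ 1
  have hMR : (1:ℝ) ≤ (M:ℝ) := by exact_mod_cast hM1
  have hNR : (0:ℝ) < (m:ℝ) + M := by linarith [Nat.cast_nonneg (α := ℝ) m]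
  have hN1 : 1 ≤ m + M := by omega
  have hlogN : (0:ℝ) ≤ Real.log ((m:ℝ)+M) := by
    apply Real.log_nonneg; linarith [Nat.cast_nonneg (α := ℝ) m]
  have hπ := log_pi_ge
  have h2 := log_two_ge
  -- decompose log R
  have hR : Real.log (((2*m).factorial * (2*M).factorial : ℝ) /
          (4^(m+M) * m.factorial * M.factorial * (m+M).factorial))
      = Real.log ((2*m).factorial : ℝ) + Real.log ((2*M).factorial : ℝ)
        - ((m:ℝ)+M)*(2*Real.log 2) - Real.log (m.factorial : ℝ) - Real.log (M.factorial : ℝ)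
        - Real.log ((m+M).factorial : ℝ) := by
    rw [Real.log_div (by positivity) (by positivity), Real.log_mul (by positivity) (by positivity),
      Real.log_mul (by positivity) (by positivity), Real.log_mul (by positivity) (by positivity),
      Real.log_mul (by positivity) (by positivity), Real.log_pow,
      show (4:ℝ) = 2^2 by norm_num, Real.log_pow]
    push_cast
    ring
  rw [hR]
  -- bounds for N!, (2M)!, M!
  have hbN := log_factorial_bounds (m+M) hN1
  have hb2M := log_factorial_bounds (2*M) (by omega)
  have hbM := log_factorial_bounds M hM1
  push_cast at hbN hb2M hbM
  have hM0R : (M:ℝ) ≠ 0 := by positivity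
  rw [show Real.log (2*(2*(M:ℝ))) = 2*Real.log 2 + Real.log M by
      rw [show 2*(2*(M:ℝ)) = 2*2*(M:ℝ) by ring, Real.log_mul (by norm_num) hM0R,
        Real.log_mul (by norm_num) (by norm_num)]; ring,
    show Real.log (2*(M:ℝ)) = Real.log 2 + Real.log M from
      Real.log_mul (by norm_num) hM0R] at hb2M
  rw [show Real.log (2*(M:ℝ)) = Real.log 2 + Real.log M from
      Real.log_mul (by norm_num) hM0R] at hbM
  rw [show Real.log (2*((m:ℝ)+M)) = Real.log 2 + Real.log ((m:ℝ)+M) from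
      Real.log_mul (by norm_num) (ne_of_gt hNR)] at hbN
  rcases Nat.eq_zero_or_pos m with hm0 | hm1
  · subst hm0
    push_cast
    simp only [Nat.cast_zero, zero_add, Nat.zero_add, Nat.mul_zero, Nat.zero_mul, mul_zero,
      zero_mul, Nat.factorial_zero, Nat.cast_one, Real.log_one] at hbN hlogN hR ⊢
    rw [abs_le]; constructor <;> linarith [hbN.1, hbN.2, hb2M.1, hb2M.2, hbM.1, hbM.2, hlogN]
  · have hmR : (1:ℝ) ≤ (m:ℝ) := by exact_mod_cast hm1
    have hm0R : (m:ℝ) ≠ 0 := by positivity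
    have hb2m := log_factorial_bounds (2*m) (by omega)
    have hbm := log_factorial_bounds m hm1
    push_cast at hb2m hbm
    rw [show Real.log (2*(2*(m:ℝ))) = 2*Real.log 2 + Real.log m by
        rw [show 2*(2*(m:ℝ)) = 2*2*(m:ℝ) by ring, Real.log_mul (by norm_num) hm0R,
          Real.log_mul (by norm_num) (by norm_num)]; ring,
      show Real.log (2*(m:ℝ)) = Real.log 2 + Real.log m from
        Real.log_mul (by norm_num) hm0R] at hb2m
    rw [show Real.log (2*(m:ℝ)) = Real.log 2 + Real.log m from
        Real.log_mul (by norm_num) hm0R] at hbm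
    rw [abs_le]; constructor <;>
      linarith [hbN.1, hbN.2, hb2M.1, hb2M.2, hbM.1, hbM.2, hb2m.1, hb2m.2, hbm.1, hbm.2, hlogN]

lemma core (m M : ℕ) :
    |Real.log (Beta ((m:ℝ)+1/2) ((M:ℝ)+1/2) / Beta (1/2) (1/2)) -
      ((m:ℝ)*Real.log m + (M:ℝ)*Real.log M - ((m:ℝ)+(M:ℝ))*Real.log ((m:ℝ)+(M:ℝ)))| ≤
    (1/2)*Real.log ((m:ℝ)+(M:ℝ)) + 1 := by
  rcases le_total m M with h | h
  · exact core_le m M h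
  · have hcomm : Beta ((m:ℝ)+1/2) ((M:ℝ)+1/2) = Beta ((M:ℝ)+1/2) ((m:ℝ)+1/2) := by
      rw [Beta, Beta, mul_comm, add_comm]; ring_nf
    have := core_le M m h
    rw [add_comm (M:ℝ) (m:ℝ)] at this
    rw [hcomm, show (m:ℝ)*Real.log m + (M:ℝ)*Real.log M
        = (M:ℝ)*Real.log M + (m:ℝ)*Real.log m from by ring]
    exact this

/-- N·τ(m/N) in expanded form. -/

lemma Ntau_eq (m M : ℕ) :
    ((m:ℝ)+(M:ℝ)) * tau ((m:ℝ) / ((m:ℝ)+(M:ℝ)))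
      = (m:ℝ)*Real.log m + (M:ℝ)*Real.log M - ((m:ℝ)+(M:ℝ))*Real.log ((m:ℝ)+(M:ℝ)) := by
  rcases Nat.eq_zero_or_pos (m + M) with hN0 | hN1
  · obtain ⟨h1, h2⟩ := Nat.add_eq_zero.mp hN0
    subst h1; subst h2; simp [tau]
  have hNR : (0:ℝ) < (m:ℝ) + M := by exact_mod_cast hN1
  have hdiv : 1 - (m:ℝ)/((m:ℝ)+M) = (M:ℝ)/((m:ℝ)+M) := by field_simp; ring
  rw [tau, hdiv]
  have key : ∀ j : ℕ, (j:ℝ) * Real.log ((j:ℝ)/((m:ℝ)+M)) = (j:ℝ)*Real.log j - (j:ℝ)*Real.log ((m:ℝ)+M) := by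
    intro j
    rcases Nat.eq_zero_or_pos j with h | h
    · subst h; simp
    · rw [Real.log_div (by exact_mod_cast h.ne') (ne_of_gt hNR)]; ring
  have km := key m
  have kM := key M
  field_simp
  nlinarith [km, kM]

/-- the edge count as a natural number -/
def ocard (A : Fin n → Fin n → Bool) (z : Fin n → Fin k) (a b : Fin k) : ℕ :=
  ((Finset.univ ×ˢ Finset.univ).filter
    fun p : Fin n × Fin n => z p.1 = a ∧ z p.2 = b ∧ A p.1 p.2 = true).card

lemma oab_eq_ocard (A : Fin n → Fin n → Bool) (z : Fin n → Fin k) (a b : Fin k) :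
    oab A z a b = (ocard A z a b : ℝ) := by
  rw [oab, ← Finset.sum_product', ocard]
  simp [Finset.sum_boole]

lemma ocard_symm (A : Fin n → Fin n → Bool) (hA : ValidAdj A) (z : Fin n → Fin k) (a b : Fin k) :
    ocard A z a b = ocard A z b a := by
  apply Finset.card_bij' (fun p _ => Prod.swap p) (fun p _ => Prod.swap p)
  · intro p hp
    simp only [Finset.mem_filter, Finset.mem_product, Finset.mem_univ, true_and] at hp ⊢
    exact ⟨hp.2.1, hp.1, (hA.1 p.2 p.1).symm ▸ hp.2.2⟩
  · intro p hp
    simp only [Finset.mem_filter, Finset.mem_product, Finset.mem_univ, true_and] at hp ⊢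
    exact ⟨hp.2.1, hp.1, (hA.1 p.2 p.1).symm ▸ hp.2.2⟩
  · intro p _; simp
  · intro p _; simp

lemma oab_symm (A : Fin n → Fin n → Bool) (hA : ValidAdj A) (z : Fin n → Fin k) (a b : Fin k) :
    oab A z a b = oab A z b a := by
  rw [oab_eq_ocard, oab_eq_ocard, ocard_symm A hA]

lemma nab_symm (z : Fin n → Fin k) (a b : Fin k) : nab z a b = nab z b a := by
  rcases eq_or_ne a b with h | h
  · rw [h]
  · rw [nab, nab, if_neg h, if_neg h.symm, mul_comm]

lemma ocard_le_offdiag (A : Fin n → Fin n → Bool) (z : Fin n → Fin k) {a b : Fin k} :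
    ocard A z a b ≤ nCount z a * nCount z b := by
  rw [ocard, nCount, nCount, ← Finset.card_product]
  apply Finset.card_le_card
  intro p hp
  simp only [Finset.mem_filter, Finset.mem_product, Finset.mem_univ, true_and] at hp ⊢
  exact ⟨hp.1, hp.2.1⟩

lemma ocard_le_diag (A : Fin n → Fin n → Bool) (hA : ValidAdj A) (z : Fin n → Fin k) (a : Fin k) :
    ocard A z a a ≤ nCount z a * (nCount z a - 1) := by
  rw [ocard, nCount]
  have hsub : ((Finset.univ ×ˢ Finset.univ).filter
      fun p : Fin n × Fin n => z p.1 = a ∧ z p.2 = a ∧ A p.1 p.2 = true) ⊆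
      (Finset.univ.filter fun i => z i = a).offDiag := by
    intro p hp
    simp only [Finset.mem_filter, Finset.mem_product, Finset.mem_univ, true_and,
      Finset.mem_offDiag] at hp ⊢
    refine ⟨by simp [hp.1], by simp [hp.2.1], ?_⟩
    intro hc
    rw [hc] at hp
    exact absurd hp.2.2 (by simp [hA.2 p.2])
  calc _ ≤ _ := Finset.card_le_card hsub
    _ = _ := by rw [Finset.offDiag_card, ← Nat.pred_eq_sub_one, Nat.mul_pred]

lemma ocard_even (A : Fin n → Fin n → Bool) (hA : ValidAdj A) (z : Fin n → Fin k) (a : Fin k) :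
    ∃ h : ℕ, ocard A z a a = 2 * h := by
  classical
  set S := ((Finset.univ ×ˢ Finset.univ).filter
    fun p : Fin n × Fin n => z p.1 = a ∧ z p.2 = a ∧ A p.1 p.2 = true) with hS
  refine ⟨(S.filter fun p => p.1 < p.2).card, ?_⟩
  have hsplit := Finset.card_filter_add_card_filter_not
    (s := S) (p := fun p : Fin n × Fin n => p.1 < p.2)
  have hswap : (S.filter fun p => ¬ p.1 < p.2).card = (S.filter fun p => p.1 < p.2).card := by
    apply Finset.card_bij' (fun p _ => Prod.swap p) (fun p _ => Prod.swap p)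
    · intro p hp
      simp only [hS, Finset.mem_filter, Finset.mem_product, Finset.mem_univ, true_and] at hp ⊢
      obtain ⟨⟨h1, h2, h3⟩, h4⟩ := hp
      have hne : p.1 ≠ p.2 := by
        intro hc; rw [hc] at h3; exact absurd h3 (by simp [hA.2 p.2])
      refine ⟨⟨h2, h1, (hA.1 p.2 p.1).symm ▸ h3⟩, ?_⟩
      exact lt_of_le_of_ne (not_lt.mp h4) (Ne.symm hne)
    · intro p hp
      simp only [hS, Finset.mem_filter, Finset.mem_product, Finset.mem_univ, true_and] at hp ⊢
      obtain ⟨⟨h1, h2, h3⟩, h4⟩ := hp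
      exact ⟨⟨h2, h1, (hA.1 p.2 p.1).symm ▸ h3⟩, not_lt.mpr h4.le⟩
    · intro p _; simp
    · intro p _; simp
  rw [ocard, ← hS, ← hsplit, hswap]
  ring

lemma nCount_le (z : Fin n → Fin k) (a : Fin k) : nCount z a ≤ n := by
  rw [nCount]
  calc _ ≤ Finset.univ.card := Finset.card_filter_le _ _
    _ = n := by simp

lemma half_div_half (x y : ℝ) : (x/2)/(y/2) = x/y := by
  rw [div_div_div_comm, div_self (two_ne_zero), div_one]

lemma fold (A : Fin n → Fin n → Bool) (hA : ValidAdj A) (e : Fin n → Fin k) :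
    ∑ a : Fin k, ∑ b : Fin k, nab e a b * tau (oab A e a b / nab e a b)
      = 2 * ∑ p ∈ Finset.univ.filter (fun p : Fin k × Fin k => p.1 ≤ p.2),
          ntilde e p.1 p.2 * tau (otilde A e p.1 p.2 / ntilde e p.1 p.2) := by
  classical
  set f : Fin k × Fin k → ℝ :=
    fun p => nab e p.1 p.2 * tau (oab A e p.1 p.2 / nab e p.1 p.2) with hf
  set g : Fin k × Fin k → ℝ :=
    fun p => ntilde e p.1 p.2 * tau (otilde A e p.1 p.2 / ntilde e p.1 p.2) with hg
  have hLHS : ∑ a : Fin k, ∑ b : Fin k, nab e a b * tau (oab A e a b / nab e a b)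
      = ∑ p : Fin k × Fin k, f p := by
    rw [← Finset.sum_product']
    simp [Finset.univ_product_univ, hf]
  rw [hLHS]
  have hsplit := Finset.sum_filter_add_sum_filter_not Finset.univ
    (fun p : Fin k × Fin k => p.1 ≤ p.2) f
  -- the strictly-greater part equals the strictly-less part
  have hswap : ∑ p ∈ Finset.univ.filter (fun p : Fin k × Fin k => ¬ p.1 ≤ p.2), f p
      = ∑ p ∈ Finset.univ.filter (fun p : Fin k × Fin k => p.1 < p.2), f p := by
    apply Finset.sum_nbij' (fun p => Prod.swap p) (fun p => Prod.swap p)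
    · intro p hp
      simp only [Finset.mem_filter, Finset.mem_univ, true_and, not_le] at hp ⊢
      exact hp
    · intro p hp
      simp only [Finset.mem_filter, Finset.mem_univ, true_and, not_le] at hp ⊢
      exact hp
    · intro p _; simp
    · intro p _; simp
    · intro p _
      simp only [hf, Prod.fst_swap, Prod.snd_swap]
      rw [nab_symm, oab_symm A hA]
  -- split ≤ into < and =
  have hle_split : ∀ h : Fin k × Fin k → ℝ,
      ∑ p ∈ Finset.univ.filter (fun p : Fin k × Fin k => p.1 ≤ p.2), h p
      = ∑ p ∈ Finset.univ.filter (fun p : Fin k × Fin k => p.1 < p.2), h p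
        + ∑ p ∈ Finset.univ.filter (fun p : Fin k × Fin k => p.1 = p.2), h p := by
    intro h
    rw [← Finset.sum_filter_add_sum_filter_not
      (Finset.univ.filter (fun p : Fin k × Fin k => p.1 ≤ p.2))
      (fun p : Fin k × Fin k => p.1 < p.2) h]
    congr 1
    · congr 1
      rw [Finset.filter_filter]
      apply Finset.filter_congr
      intro p _
      constructor
      · rintro ⟨_, h2⟩; exact h2
      · intro h2; exact ⟨le_of_lt h2, h2⟩
    · congr 1
      rw [Finset.filter_filter]
      apply Finset.filter_congr
      intro p _
      constructor
      · rintro ⟨h1, h2⟩; exact le_antisymm h1 (not_lt.mp h2)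
      · intro h2; exact ⟨le_of_eq h2, by rw [h2]; exact lt_irrefl _⟩
  have hlt_eq : ∀ p : Fin k × Fin k, p.1 < p.2 → g p = f p := by
    intro p hp
    have hne : p.1 ≠ p.2 := ne_of_lt hp
    simp only [hg, hf, ntilde, otilde, if_neg hne]
  have hdiag : ∀ p : Fin k × Fin k, p.1 = p.2 → f p = 2 * g p := by
    intro p hp
    simp only [hg, hf, ntilde, otilde, if_pos hp, half_div_half]
    ring
  have h1 : ∑ p ∈ Finset.univ.filter (fun p : Fin k × Fin k => p.1 = p.2), f p
      = ∑ p ∈ Finset.univ.filter (fun p : Fin k × Fin k => p.1 = p.2), 2 * g p :=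
    Finset.sum_congr rfl fun p hp => hdiag p (Finset.mem_filter.mp hp).2
  have h2 : ∑ p ∈ Finset.univ.filter (fun p : Fin k × Fin k => p.1 < p.2), f p
      = ∑ p ∈ Finset.univ.filter (fun p : Fin k × Fin k => p.1 < p.2), g p :=
    Finset.sum_congr rfl fun p hp => (hlt_eq p (Finset.mem_filter.mp hp).2).symm
  have h3 : ∑ p ∈ Finset.univ.filter (fun p : Fin k × Fin k => p.1 = p.2), 2 * g p
      = 2 * ∑ p ∈ Finset.univ.filter (fun p : Fin k × Fin k => p.1 = p.2), g p := by
    rw [Finset.mul_sum]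
  rw [← hsplit, hswap]
  rw [hle_split f, hle_split g]
  linarith [h1, h2, h3]

lemma cast_mul_pred (c : ℕ) : (c:ℝ) * ((c:ℝ) - 1) = ((c*(c-1) : ℕ) : ℝ) := by
  cases c with
  | zero => simp
  | succ c => push_cast [Nat.succ_sub_one]; ring

lemma exists_nat_pair (A : Fin n → Fin n → Bool) (hA : ValidAdj A) (e : Fin n → Fin k)
    (a b : Fin k) :
    ∃ m M : ℕ, otilde A e a b = (m:ℝ) ∧ ntilde e a b = (m:ℝ)+(M:ℝ) ∧ m + M ≤ n^2 := by
  have hn2 : n^2 = n*n := sq n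
  rcases eq_or_ne a b with rfl | hab
  · obtain ⟨h, hO⟩ := ocard_even A hA e a
    have hOle := ocard_le_diag A hA e a
    have hceven : ∃ t, nCount e a*(nCount e a-1) = 2*t := by
      rcases Nat.even_or_odd (nCount e a) with hev | hodd
      · obtain ⟨u, hu⟩ := hev; exact ⟨u*(nCount e a-1), by rw [hu]; ring⟩
      · have : Even (nCount e a - 1) := Nat.Odd.sub_odd hodd odd_one
        obtain ⟨u, hu⟩ := this; exact ⟨nCount e a*u, by rw [hu]; ring⟩
    obtain ⟨t, ht⟩ := hceven
    have hht : h ≤ t := by omega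
    have hcle : nCount e a*(nCount e a-1) ≤ n^2 := by
      have h1 : nCount e a*(nCount e a-1) ≤ nCount e a*nCount e a :=
        Nat.mul_le_mul_left (nCount e a) (Nat.sub_le (nCount e a) 1)
      have h2 : nCount e a*nCount e a ≤ n*n := Nat.mul_le_mul (nCount_le e a) (nCount_le e a)
      omega
    refine ⟨h, t - h, ?_, ?_, by omega⟩
    · rw [otilde, if_pos rfl, oab_eq_ocard, hO]; push_cast; ring
    · rw [ntilde, if_pos rfl, nab, if_pos rfl, cast_mul_pred, ht]
      push_cast [Nat.cast_sub hht]; ring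
  · have hm := ocard_le_offdiag A e (a := a) (b := b)
    have hcle : nCount e a * nCount e b ≤ n^2 := by
      have := Nat.mul_le_mul (nCount_le e a) (nCount_le e b); omega
    refine ⟨ocard A e a b, nCount e a * nCount e b - ocard A e a b, ?_, ?_, by omega⟩
    · rw [otilde, if_neg hab, oab_eq_ocard]
    · rw [ntilde, if_neg hab, nab, if_neg hab]
      push_cast [Nat.cast_sub hm]; ring

lemma pair_bound (hn : 1 ≤ n) (A : Fin n → Fin n → Bool) (hA : ValidAdj A) (e : Fin n → Fin k)
    (a b : Fin k) :
    |Real.log (Beta (otilde A e a b + 1/2) (ntilde e a b - otilde A e a b + 1/2) / Beta (1/2) (1/2))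
      - ntilde e a b * tau (otilde A e a b / ntilde e a b)| ≤ Real.log n + 2 := by
  obtain ⟨m, M, hmo, hN, hle⟩ := exists_nat_pair A hA e a b
  rw [hmo, hN, show (m:ℝ) + M - m + 1/2 = (M:ℝ) + 1/2 by ring]
  have hcore := core m M
  rw [← Ntau_eq] at hcore
  have hlogn : (0:ℝ) ≤ Real.log n := Real.log_natCast_nonneg n
  have hbound : Real.log ((m:ℝ)+M) ≤ 2 * Real.log n := by
    rcases Nat.eq_zero_or_pos (m + M) with h0 | h1
    · obtain ⟨rfl, rfl⟩ := Nat.add_eq_zero.mp h0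
      simpa using by linarith
    · have hpos : (0:ℝ) < (m:ℝ)+M := by exact_mod_cast h1
      have : ((m:ℝ)+M) ≤ ((n:ℝ))^2 := by
        have : ((m+M:ℕ):ℝ) ≤ ((n^2:ℕ):ℝ) := by exact_mod_cast hle
        push_cast at this; linarith
      calc Real.log ((m:ℝ)+M) ≤ Real.log ((n:ℝ)^2) := Real.log_le_log hpos this
        _ = 2 * Real.log n := by rw [Real.log_pow]; push_cast; ring
  calc _ ≤ (1/2)*Real.log ((m:ℝ)+(M:ℝ)) + 1 := hcore
    _ ≤ Real.log n + 2 := by linarith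

/-- the ML and ICL modularities differ by at most `k²(log n + 2)/n²`. -/
theorem stmt0 (n k : ℕ) (hn : 1 ≤ n) (hk : 1 ≤ k)
    (A : Fin n → Fin n → Bool) (hA : ValidAdj A) (e : Fin n → Fin k) :
    |QICL A e - QML A e| ≤ (k : ℝ) ^ 2 * (Real.log n + 2) / (n : ℝ) ^ 2 := by
  have hlogn : (0:ℝ) ≤ Real.log n := Real.log_natCast_nonneg n
  have hfold : QML A e = (1 / (n : ℝ) ^ 2) *
      ∑ p ∈ Finset.univ.filter (fun p : Fin k × Fin k => p.1 ≤ p.2),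
        ntilde e p.1 p.2 * tau (otilde A e p.1 p.2 / ntilde e p.1 p.2) := by
    rw [QML, fold A hA e]; ring
  rw [QICL, hfold, ← mul_sub, ← Finset.sum_sub_distrib, abs_mul,
    abs_of_nonneg (by positivity : (0:ℝ) ≤ 1 / (n:ℝ)^2)]
  have hcard : ((Finset.univ.filter (fun p : Fin k × Fin k => p.1 ≤ p.2)).card : ℝ) ≤ (k:ℝ)^2 := by
    have h1 : (Finset.univ.filter (fun p : Fin k × Fin k => p.1 ≤ p.2)).card
        ≤ (Finset.univ : Finset (Fin k × Fin k)).card := Finset.card_filter_le _ _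
    have h2 : (Finset.univ : Finset (Fin k × Fin k)).card = k * k := by
      simp [Fintype.card_prod]
    have : (Finset.univ.filter (fun p : Fin k × Fin k => p.1 ≤ p.2)).card ≤ k^2 := by
      rw [sq]; omega
    calc ((Finset.univ.filter (fun p : Fin k × Fin k => p.1 ≤ p.2)).card : ℝ) ≤ ((k^2 : ℕ) : ℝ) := by exact_mod_cast this
      _ = (k:ℝ)^2 := by push_cast; ring
  calc (1 / (n:ℝ)^2) * |∑ p ∈ Finset.univ.filter (fun p : Fin k × Fin k => p.1 ≤ p.2),
        (Real.log (Beta (otilde A e p.1 p.2 + 1/2)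
          (ntilde e p.1 p.2 - otilde A e p.1 p.2 + 1/2) / Beta (1/2) (1/2))
          - ntilde e p.1 p.2 * tau (otilde A e p.1 p.2 / ntilde e p.1 p.2))|
      ≤ (1 / (n:ℝ)^2) * ∑ p ∈ Finset.univ.filter (fun p : Fin k × Fin k => p.1 ≤ p.2),
          |Real.log (Beta (otilde A e p.1 p.2 + 1/2)
            (ntilde e p.1 p.2 - otilde A e p.1 p.2 + 1/2) / Beta (1/2) (1/2))
            - ntilde e p.1 p.2 * tau (otilde A e p.1 p.2 / ntilde e p.1 p.2)| := by
        apply mul_le_mul_of_nonneg_left (Finset.abs_sum_le_sum_abs _ _) (by positivity)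
    _ ≤ (1 / (n:ℝ)^2) * ∑ _p ∈ Finset.univ.filter (fun p : Fin k × Fin k => p.1 ≤ p.2),
          (Real.log n + 2) := by
        apply mul_le_mul_of_nonneg_left _ (by positivity)
        apply Finset.sum_le_sum
        intro p _
        exact pair_bound hn A hA e p.1 p.2
    _ = (1 / (n:ℝ)^2) * (((Finset.univ.filter (fun p : Fin k × Fin k => p.1 ≤ p.2)).card : ℝ)
          * (Real.log n + 2)) := by rw [Finset.sum_const, nsmul_eq_mul]
    _ ≤ (1 / (n:ℝ)^2) * ((k:ℝ)^2 * (Real.log n + 2)) := by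
        apply mul_le_mul_of_nonneg_left _ (by positivity)
        apply mul_le_mul_of_nonneg_right hcard (by linarith)
    _ = (k : ℝ) ^ 2 * (Real.log n + 2) / (n : ℝ) ^ 2 := by ring
end SBM
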